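/- In the setting of the truncated-state energy bound, if additionally all amplitudes c_I are real (so that ⟨ψ, H ψ_T⟩ is real, i.e., Im⟨ψ, H ψ_T⟩ = 0), then the improved bound ⟨ψ_T, H ψ_T⟩ − ⟨ψ, H ψ⟩ ≤ 2 ρ(H) √ℓ holds, where ℓ = ∑_{I∉T}|c_I|². -/

import Mathlib

open scoped ComplexInnerProductSpace in
/-- Improved truncated-state energy bound for real amplitudes: if all
coordinates of `ψ` are real (so that `⟨ψ, H ψ_T⟩` is real, i.e.,
`Im ⟨ψ, H ψ_T⟩ = 0`), then `⟨ψ_T, H ψ_T⟩ − ⟨ψ, H ψ⟩ ≤ 2·ρ(H)·√ℓ`. -/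
theorem truncated_state_energy_bound_real (N : ℕ) (H : Matrix (Fin N) (Fin N) ℂ)
    (hH : H.IsHermitian)
    (A : EuclideanSpace ℂ (Fin N) →L[ℂ] EuclideanSpace ℂ (Fin N))
    (hA : A = Matrix.toEuclideanCLM (𝕜 := ℂ) H)
    (ρ : ℝ) (hρ : ρ = ‖A‖)
    (ψ : EuclideanSpace ℂ (Fin N)) (hψ : ‖ψ‖ = 1)
    (hreal : ∀ I, (ψ I).im = 0)
    (T : Finset (Fin N))
    (ℓ : ℝ) (hℓdef : ℓ = ∑ I ∈ Tᶜ, ‖ψ I‖ ^ 2) (hℓ : ℓ < 1)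
    (ψT : EuclideanSpace ℂ (Fin N))
    (hψT : ∀ I, ψT I = if I ∈ T then ψ I / (Real.sqrt (1 - ℓ) : ℂ) else 0)
    (him : (⟪ψ, A ψT⟫).im = 0) :
    (⟪ψT, A ψT⟫).re - (⟪ψ, A ψ⟫).re ≤ 2 * ρ * Real.sqrt ℓ := by
  have hℓ0 : 0 ≤ ℓ := by rw [hℓdef]; positivity
  have h1ℓ : 0 < 1 - ℓ := by linarith
  set s : ℝ := Real.sqrt (1 - ℓ) with hs
  have hs0 : 0 < s := Real.sqrt_pos.2 h1ℓ
  have hs2 : s ^ 2 = 1 - ℓ := Real.sq_sqrt h1ℓ.le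
  have hs1 : s ≤ 1 := by nlinarith
  -- total sum of squared norms is 1
  have hsum : ∑ i, ‖ψ i‖ ^ 2 = 1 := by
    have h := EuclideanSpace.norm_eq ψ
    exact Real.sqrt_eq_one.1 (h.symm.trans hψ)
  have hTsum : ∑ i ∈ T, ‖ψ i‖ ^ 2 = 1 - ℓ := by
    have h := Finset.sum_add_sum_compl T (fun i => ‖ψ i‖ ^ 2)
    rw [hsum] at h
    rw [hℓdef]; linarith
  -- inner products
  have hinner : ∀ φ : EuclideanSpace ℂ (Fin N), ⟪ψT, φ⟫ = (↑s)⁻¹ * ∑ i ∈ T, (starRingEnd ℂ) (ψ i) * φ i := by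
    intro φ
    rw [PiLp.inner_apply]
    rw [show (fun i => ⟪ψT i, φ i⟫) = fun i => if i ∈ T then (↑s)⁻¹ * ((starRingEnd ℂ) (ψ i) * φ i) else 0 by
      funext i
      simp only [RCLike.inner_apply, hψT i]
      split
      · rw [div_eq_mul_inv, map_mul, map_inv₀, Complex.conj_ofReal]; ring
      · simp]
    rw [Finset.sum_ite_mem, Finset.univ_inter, ← Finset.mul_sum]
  have hTnorm : ∀ i ∈ T, (starRingEnd ℂ) (ψ i) * ψ i = (‖ψ i‖ ^ 2 : ℝ) := by
    intro i _
    rw [Complex.conj_mul']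
    norm_cast
  have hinnerTψ : ⟪ψT, ψ⟫ = (s : ℂ) := by
    rw [hinner ψ, Finset.sum_congr rfl hTnorm, ← Complex.ofReal_sum, hTsum, ← hs2]
    have hsne : (s:ℂ) ≠ 0 := by exact_mod_cast hs0.ne'
    push_cast
    field_simp
  have hnormT : ‖ψT‖ = 1 := by
    have hin : ⟪ψT, ψT⟫ = 1 := by
      rw [hinner ψT]
      have : ∀ i ∈ T, (starRingEnd ℂ) (ψ i) * ψT i = ((↑s)⁻¹ : ℂ) * (‖ψ i‖ ^ 2 : ℝ) := by
        intro i hi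
        rw [hψT i, if_pos hi, div_eq_mul_inv, ← hTnorm i hi]
        ring
      rw [Finset.sum_congr rfl this, ← Finset.mul_sum, ← Complex.ofReal_sum, hTsum, ← hs2]
      have hsne : (s:ℂ) ≠ 0 := by exact_mod_cast hs0.ne'
      push_cast
      field_simp
    have h2 : (‖ψT‖ : ℝ) ^ 2 = 1 := by
      rw [norm_sq_eq_re_inner (𝕜 := ℂ) ψT, hin]
      simp
    nlinarith [norm_nonneg ψT, sq_nonneg (‖ψT‖ - 1), sq_nonneg (‖ψT‖ + 1)]
  -- symmetry of A
  have hsym : ∀ x y : EuclideanSpace ℂ (Fin N), ⟪A x, y⟫ = ⟪x, A y⟫ := by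
    have h := (Matrix.isHermitian_iff_isSymmetric (A := H)).1 hH
    intro x y
    rw [hA]
    exact h x y
  have hcross : ⟪ψT, A ψ⟫ = ⟪ψ, A ψT⟫ := by
    rw [← inner_conj_symm ψT (A ψ), hsym ψ ψT]
    exact Complex.conj_eq_iff_im.2 him
  have hkey : ⟪ψT - ψ, A (ψT + ψ)⟫ = ⟪ψT, A ψT⟫ - ⟪ψ, A ψ⟫ := by
    rw [map_add, inner_sub_left, inner_add_right, inner_add_right, hcross]
    ring
  have hreT : (⟪ψT, ψ⟫).re = s := by rw [hinnerTψ]; simp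
  have hu : ‖ψT - ψ‖ ^ 2 = 2 - 2 * s := by
    rw [@norm_sub_sq ℂ _ _ _ _ ψT ψ, hψ, hnormT, RCLike.re_to_complex, hreT]
    ring
  have hv : ‖ψT + ψ‖ ^ 2 = 2 + 2 * s := by
    rw [@norm_add_sq ℂ _ _ _ _ ψT ψ, hψ, hnormT, RCLike.re_to_complex, hreT]
    ring
  have huv : ‖ψT - ψ‖ * ‖ψT + ψ‖ = 2 * Real.sqrt ℓ := by
    have h1 : ‖ψT - ψ‖ = Real.sqrt (2 - 2 * s) := by
      rw [← hu, Real.sqrt_sq (norm_nonneg _)]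
    have h2 : ‖ψT + ψ‖ = Real.sqrt (2 + 2 * s) := by
      rw [← hv, Real.sqrt_sq (norm_nonneg _)]
    rw [h1, h2, ← Real.sqrt_mul (by linarith)]
    have h3 : (2 - 2 * s) * (2 + 2 * s) = 2 ^ 2 * ℓ := by nlinarith
    rw [h3, Real.sqrt_mul (by positivity), Real.sqrt_sq (by norm_num)]
  -- final estimate
  have hbound : (⟪ψT - ψ, A (ψT + ψ)⟫).re ≤ 2 * ρ * Real.sqrt ℓ := by
    have h1 : (⟪ψT - ψ, A (ψT + ψ)⟫).re ≤ ‖⟪ψT - ψ, A (ψT + ψ)⟫‖ := Complex.re_le_norm _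
    have h2 : ‖⟪ψT - ψ, A (ψT + ψ)⟫‖ ≤ ‖ψT - ψ‖ * ‖A (ψT + ψ)‖ := norm_inner_le_norm _ _
    have h3 : ‖A (ψT + ψ)‖ ≤ ‖A‖ * ‖ψT + ψ‖ := A.le_opNorm _
    have h4 : ‖ψT - ψ‖ * ‖A (ψT + ψ)‖ ≤ ‖ψT - ψ‖ * (‖A‖ * ‖ψT + ψ‖) :=
      mul_le_mul_of_nonneg_left h3 (norm_nonneg _)
    have h5 : ‖ψT - ψ‖ * (‖A‖ * ‖ψT + ψ‖) = ‖A‖ * (‖ψT - ψ‖ * ‖ψT + ψ‖) := by ring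
    rw [h5, huv] at h4
    rw [hρ]
    calc (⟪ψT - ψ, A (ψT + ψ)⟫).re ≤ ‖⟪ψT - ψ, A (ψT + ψ)⟫‖ := h1
      _ ≤ ‖A‖ * (2 * Real.sqrt ℓ) := le_trans h2 h4
      _ = 2 * ‖A‖ * Real.sqrt ℓ := by ring
  have hre : (⟪ψT - ψ, A (ψT + ψ)⟫).re = (⟪ψT, A ψT⟫).re - (⟪ψ, A ψ⟫).re := by
    rw [hkey, Complex.sub_re]
  linarith [hbound, hre.symm.le, hre.le]
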